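/- For any oriented tree T^σ with matching number β(T), the skew-rank satisfies sr(T^σ) = 2β(T). -/

import Mathlib

open SimpleGraph Set Submodule Matrix

/-- S is the skew-adjacency matrix of some oriented graph: it is skew-symmetric
with entries in {0, 1, -1}. -/
def IsSkewAdjacency {V : Type} [Fintype V] [DecidableEq V] (S : Matrix V V ℝ) : Prop :=
  S.transpose = -S ∧ ∀ i j : V, S i j = 0 ∨ S i j = 1 ∨ S i j = -1

/-- S is the skew-adjacency matrix of an orientation of the simple graph G. -/
def IsSkewAdjacencyOf {V : Type} [Fintype V] [DecidableEq V]
    (S : Matrix V V ℝ) (G : SimpleGraph V) : Prop :=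
  IsSkewAdjacency S ∧ ∀ i j : V, S i j ≠ 0 ↔ G.Adj i j

/-- The matching number of a simple graph on a finite vertex set. -/
noncomputable def matchingNumber {V : Type} [Fintype V] (G : SimpleGraph V) : ℕ :=
  sSup {k | ∃ M : G.Subgraph, M.IsMatching ∧ M.edgeSet.ncard = k}

lemma exists_leaf {V : Type} [Fintype V] {G : SimpleGraph V} (hG : G.IsAcyclic)
    {a b : V} (hab : G.Adj a b) :
    ∃ u v : V, G.Adj u v ∧ ∀ w, G.Adj v w → w = u := by
  classical
  set L : Set ℕ := {n | ∃ (x y : V) (p : G.Walk x y), p.IsPath ∧ p.length = n} with hL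
  have hne : (1 : ℕ) ∈ L := ⟨a, b, (Path.singleton hab).1, (Path.singleton hab).2, rfl⟩
  have hbdd : ∀ n ∈ L, n ≤ Fintype.card V := by
    rintro n ⟨x, y, p, hp, rfl⟩
    exact hp.length_lt.le
  have hmem : sSup L ∈ L := Nat.sSup_mem ⟨1, hne⟩ ⟨Fintype.card V, hbdd⟩
  obtain ⟨x, y, p, hp, hlen⟩ := hmem
  have hpos : 1 ≤ p.length := by
    rw [hlen]
    exact le_csSup ⟨Fintype.card V, hbdd⟩ hne
  cases p with
  | nil => simp at hpos
  | @cons _ c _ h q =>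
    refine ⟨c, x, h.symm, fun w hw => ?_⟩
    by_contra hwc
    rw [Walk.cons_isPath_iff] at hp
    obtain ⟨hq, hxq⟩ := hp
    by_cases hws : w ∈ (Walk.cons h q).support
    · -- w on the path: contradiction with acyclicity
      have hwx : w ≠ x := fun e => G.irrefl (e ▸ hw)
      have hwq : w ∈ q.support := by
        have hx : w ∈ x :: q.support := Walk.support_cons h q ▸ hws
        rcases List.mem_cons.mp hx with h1 | h2
        · exact absurd h1 hwx
        · exact h2
      have htk : (Walk.cons h (q.takeUntil w hwq)).IsPath := by
        refine Walk.IsPath.cons (hq.takeUntil hwq) ?_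
        intro hx
        exact hxq (Walk.support_takeUntil_subset _ hwq hx)
      have := hG.path_unique (Path.singleton hw) ⟨Walk.cons h (q.takeUntil w hwq), htk⟩
      have hlen1 : (Path.singleton hw).1.length = (Walk.cons h (q.takeUntil w hwq)).length := by
        rw [this]
      simp [Path.singleton, Walk.length_cons] at hlen1
      exact hwc hlen1.symm
    · -- extend the path
      have hext : (Walk.cons hw.symm (Walk.cons h q)).IsPath :=
        Walk.IsPath.cons (Walk.cons_isPath_iff h q |>.2 ⟨hq, hxq⟩) hws
      have : (Walk.cons h q).length + 1 ∈ L := ⟨w, y, _, hext, by simp [Walk.length_cons]⟩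
      have hle := le_csSup ⟨Fintype.card V, hbdd⟩ this
      omega


lemma rank_pendant {V : Type} [Fintype V] [DecidableEq V] (S S' : Matrix V V ℝ) (u v : V)
    (huv : u ≠ v) (hSvu : S v u ≠ 0) (hSuv : S u v ≠ 0)
    (hrowv : ∀ j, j ≠ u → S v j = 0) (hcolv : ∀ i, i ≠ u → S i v = 0)
    (hS' : ∀ i j, S' i j = if i = u ∨ i = v ∨ j = u ∨ j = v then (0:ℝ) else S i j) :
    S.rank = S'.rank + 2 := by
  classical
  set e : V → ℝ := Pi.single u 1 with he
  set cu : V → ℝ := Sᵀ u with hcu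
  set P : Submodule ℝ (V → ℝ) := span ℝ (Set.range S'ᵀ) with hP
  set Q : Submodule ℝ (V → ℝ) := span ℝ (Set.range ![e, cu]) with hQ
  have heu : e u = 1 := Pi.single_eq_same u 1
  have hev : e v = 0 := Pi.single_eq_of_ne (Ne.symm huv) 1
  have hcolv' : Sᵀ v = S u v • e := by
    funext i
    by_cases hi : i = u
    · subst hi; simp [he, Matrix.transpose_apply]
    · simp [he, Matrix.transpose_apply, hcolv i hi, Pi.single_eq_of_ne hi]
  have hcol'u : S'ᵀ u = 0 := by funext i; simp [Matrix.transpose_apply, hS']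
  have hcol'v : S'ᵀ v = 0 := by funext i; simp [Matrix.transpose_apply, hS']
  have hcolj : ∀ j, j ≠ u → j ≠ v → Sᵀ j = S'ᵀ j + S u j • e := by
    intro j hju hjv
    funext i
    by_cases hiu : i = u
    · subst hiu; simp [Matrix.transpose_apply, hS', hju, hjv, heu]
    · by_cases hiv : i = v
      · subst hiv
        simp [Matrix.transpose_apply, hS', hju, hjv, hev, hrowv j hju]
      · simp [Matrix.transpose_apply, hS', hiu, hiv, hju, hjv, he, Pi.single_eq_of_ne hiu]
  -- membership facts
  have heQ : e ∈ Q := subset_span ⟨0, rfl⟩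
  have hcuQ : cu ∈ Q := subset_span ⟨1, rfl⟩
  -- elements of P vanish at u and v
  have hPval : ∀ x ∈ P, x u = 0 ∧ x v = 0 := by
    intro x hx
    induction hx using Submodule.span_induction with
    | mem x hx =>
      obtain ⟨j, rfl⟩ := hx
      constructor <;> simp [Matrix.transpose_apply, hS']
    | zero => simp
    | add x y _ _ hx hy => exact ⟨by simp [hx.1, hy.1], by simp [hx.2, hy.2]⟩
    | smul a x _ hx => exact ⟨by simp [hx.1], by simp [hx.2]⟩
  -- span of columns of S = Q ⊔ P
  have hspan : span ℝ (Set.range Sᵀ) = Q ⊔ P := by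
    apply le_antisymm
    · rw [span_le]
      rintro _ ⟨j, rfl⟩
      by_cases hju : j = u
      · subst hju; exact mem_sup_left hcuQ
      · by_cases hjv : j = v
        · subst hjv
          rw [hcolv']
          exact smul_mem _ _ (mem_sup_left heQ)
        · rw [hcolj j hju hjv]
          exact add_mem (mem_sup_right (subset_span ⟨j, rfl⟩))
            (smul_mem _ _ (mem_sup_left heQ))
    · apply sup_le
      · rw [hQ, span_le]
        rintro _ ⟨i, rfl⟩
        have heS : e ∈ span ℝ (Set.range Sᵀ) := by
          have : e = (S u v)⁻¹ • Sᵀ v := by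
            rw [hcolv', smul_smul, inv_mul_cancel₀ hSuv, one_smul]
          rw [this]
          exact smul_mem _ _ (subset_span ⟨v, rfl⟩)
        fin_cases i
        · exact heS
        · exact subset_span ⟨u, rfl⟩
      · rw [hP, span_le]
        rintro _ ⟨j, rfl⟩
        by_cases hju : j = u
        · subst hju; rw [hcol'u]; exact zero_mem _
        · by_cases hjv : j = v
          · subst hjv; rw [hcol'v]; exact zero_mem _
          · have : S'ᵀ j = Sᵀ j - S u j • e := by rw [hcolj j hju hjv]; abel
            rw [this]
            refine sub_mem (subset_span ⟨j, rfl⟩) (smul_mem _ _ ?_)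
            have : e = (S u v)⁻¹ • Sᵀ v := by
              rw [hcolv', smul_smul, inv_mul_cancel₀ hSuv, one_smul]
            rw [this]
            exact smul_mem _ _ (subset_span ⟨v, rfl⟩)
  have hindep : LinearIndependent ℝ ![e, cu] := by
    rw [LinearIndependent.pair_iff]
    intro s t hst
    have hv := congrFun hst v
    simp [hev, hcu, Matrix.transpose_apply] at hv
    have ht : t = 0 := hv.resolve_right hSvu
    subst ht
    have hu := congrFun hst u
    simp [heu] at hu
    exact ⟨hu, rfl⟩
  have hQP : Q ⊓ P = ⊥ := by
    rw [eq_bot_iff]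
    rintro x ⟨hxQ, hxP⟩
    obtain ⟨c, hc⟩ := (mem_span_range_iff_exists_fun ℝ).mp hxQ
    rw [Fin.sum_univ_two] at hc
    simp only [Matrix.cons_val_zero, Matrix.cons_val_one, Matrix.head_cons] at hc
    obtain ⟨hxu, hxv⟩ := hPval x hxP
    have hv := congrFun hc v
    simp [hev, hcu, Matrix.transpose_apply, hxv] at hv
    have hc1 : c 1 = 0 := hv.resolve_right hSvu
    have hu := congrFun hc u
    simp [heu, hc1, hxu] at hu
    have : x = 0 := by
      rw [← hc, hc1, hu]
      simp
    simp [this]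
  have hfQ : Module.finrank ℝ Q = 2 := by
    rw [hQ, finrank_span_eq_card hindep]
    simp
  have hrk : S.rank = Module.finrank ℝ (Q ⊔ P : Submodule ℝ (V → ℝ)) := by
    rw [Matrix.rank_eq_finrank_span_cols, ← hspan]; rfl
  have hrk' : S'.rank = Module.finrank ℝ P := Matrix.rank_eq_finrank_span_cols _
  have := Submodule.finrank_sup_add_finrank_inf_eq Q P
  rw [hQP] at this
  simp only [finrank_bot, add_zero] at this
  omega

section MatchingLemmas
variable {V : Type} [Fintype V]

omit [Fintype V] in
lemma matching_set_nonempty (G : SimpleGraph V) :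
    (0 : ℕ) ∈ {k | ∃ M : G.Subgraph, M.IsMatching ∧ M.edgeSet.ncard = k} := by
  refine ⟨⊥, fun v hv => absurd hv ?_, ?_⟩
  · simp [SimpleGraph.Subgraph.verts_bot]
  · simp [SimpleGraph.Subgraph.edgeSet_bot]

lemma matching_set_bddAbove (G : SimpleGraph V) :
    ∀ k ∈ {k | ∃ M : G.Subgraph, M.IsMatching ∧ M.edgeSet.ncard = k},
      k ≤ (Set.univ : Set (Sym2 V)).ncard := by
  rintro k ⟨M, _, rfl⟩
  exact Set.ncard_le_ncard (Set.subset_univ _) Set.finite_univ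

lemma matchingNumber_mem (G : SimpleGraph V) :
    ∃ M : G.Subgraph, M.IsMatching ∧ M.edgeSet.ncard = matchingNumber G :=
  Nat.sSup_mem ⟨0, matching_set_nonempty G⟩ ⟨_, matching_set_bddAbove G⟩

lemma le_matchingNumber (G : SimpleGraph V) (M : G.Subgraph) (hM : M.IsMatching) :
    M.edgeSet.ncard ≤ matchingNumber G :=
  le_csSup ⟨_, matching_set_bddAbove G⟩ ⟨M, hM, rfl⟩

set_option maxHeartbeats 1000000 in
lemma matchingNumber_pendant (G G' : SimpleGraph V) (u v : V) (huv : G.Adj u v)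
    (hleaf : ∀ w, G.Adj v w → w = u)
    (hG' : ∀ i j, G'.Adj i j ↔ G.Adj i j ∧ i ≠ u ∧ i ≠ v ∧ j ≠ u ∧ j ≠ v) :
    matchingNumber G = matchingNumber G' + 1 := by
  classical
  have hne : u ≠ v := huv.ne
  apply le_antisymm
  · -- β(G) ≤ β(G') + 1
    obtain ⟨M, hM, hcard⟩ := matchingNumber_mem G
    set bad : Set V := {x | x = u ∨ x = v ∨ M.Adj u x ∨ M.Adj v x} with hbad
    have hub : u ∈ bad := Or.inl rfl
    have hvb : v ∈ bad := Or.inr (Or.inl rfl)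
    set M₀ : G'.Subgraph :=
      { verts := {a | ∃ b, M.Adj a b ∧ a ∉ bad ∧ b ∉ bad}
        Adj := fun a b => M.Adj a b ∧ a ∉ bad ∧ b ∉ bad
        adj_sub := by
          rintro a b ⟨hab, ha, hb⟩
          rw [hG']
          exact ⟨M.adj_sub hab, fun h => ha (h ▸ hub), fun h => ha (h ▸ hvb),
            fun h => hb (h ▸ hub), fun h => hb (h ▸ hvb)⟩
        edge_vert := by rintro a b ⟨hab, ha, hb⟩; exact ⟨b, hab, ha, hb⟩
        symm := by constructor; rintro a b ⟨hab, ha, hb⟩; exact ⟨hab.symm, hb, ha⟩ } with hM₀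
    have hM₀m : M₀.IsMatching := by
      rintro a ⟨b, hab, ha, hb⟩
      refine ⟨b, ⟨hab, ha, hb⟩, ?_⟩
      rintro c ⟨hac, _, _⟩
      obtain ⟨d, _, hd⟩ := hM (M.edge_vert hab)
      rw [hd c hac, hd b hab]
    set T : Set (Sym2 V) := {e ∈ M.edgeSet | u ∈ e ∨ v ∈ e} with hT
    have hTsub : T ⊆ M.edgeSet := fun e he => he.1
    have key : ∀ x y : V, M.Adj x y → x ≠ u → x ≠ v → y ≠ u → y ≠ v → x ∉ bad := by
      intro x y hxy hxu hxv hyu hyv hmem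
      obtain ⟨d, _, hd⟩ := hM (M.edge_vert hxy)
      have hyd : y = d := hd y hxy
      rcases hmem with rfl | rfl | h | h
      · exact hxu rfl
      · exact hxv rfl
      · exact hyu ((hd u h.symm) ▸ hyd)
      · exact hyv ((hd v h.symm) ▸ hyd)
    have hedge : M₀.edgeSet = M.edgeSet \ T := by
      ext e
      induction e with
      | _ a b =>
        simp only [SimpleGraph.Subgraph.mem_edgeSet, Set.mem_diff, hT, Set.mem_setOf_eq,
          Sym2.mem_iff, not_and, not_or]
        constructor
        · rintro ⟨hab, ha, hb⟩
          refine ⟨hab, fun _ => ⟨⟨?_, ?_⟩, ?_, ?_⟩⟩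
          · rintro rfl; exact ha hub
          · rintro rfl; exact hb hub
          · rintro rfl; exact ha hvb
          · rintro rfl; exact hb hvb
        · rintro ⟨hab, hnot⟩
          obtain ⟨⟨hau, hbu⟩, hav, hbv⟩ := hnot hab
          exact ⟨hab, key a b hab (Ne.symm hau) (Ne.symm hav) (Ne.symm hbu) (Ne.symm hbv), key b a hab.symm (Ne.symm hbu) (Ne.symm hbv) (Ne.symm hau) (Ne.symm hav)⟩
    have hTcard : T.ncard ≤ 1 := by
      by_cases hu : u ∈ M.verts
      · obtain ⟨w, hw, hwu⟩ := hM hu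
        have hsub : T ⊆ {s(u, w)} := by
          rintro e ⟨he, hmem⟩
          induction e with
          | _ a b =>
            simp only [SimpleGraph.Subgraph.mem_edgeSet] at he
            simp only [Sym2.mem_iff] at hmem
            simp only [Set.mem_singleton_iff, Sym2.eq_iff]
            rcases hmem with (h | h) | (h | h)
            · subst h; exact Or.inl ⟨rfl, hwu b he⟩
            · subst h; exact Or.inr ⟨hwu a he.symm, rfl⟩
            · subst h
              have hbu : b = u := hleaf b (M.adj_sub he)
              subst hbu
              exact Or.inr ⟨hwu v he.symm, rfl⟩
            · subst h
              have hau : a = u := hleaf a (M.adj_sub he.symm)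
              subst hau
              exact Or.inl ⟨rfl, hwu v he⟩
        calc T.ncard ≤ ({s(u,w)} : Set (Sym2 V)).ncard :=
              Set.ncard_le_ncard hsub (Set.toFinite _)
          _ = 1 := Set.ncard_singleton _
      · have : T = ∅ := by
          ext e
          simp only [Set.mem_empty_iff_false, iff_false]
          rintro ⟨he, hmem⟩
          induction e with
          | _ a b =>
            simp only [SimpleGraph.Subgraph.mem_edgeSet] at he
            simp only [Sym2.mem_iff] at hmem
            rcases hmem with (h | h) | (h | h)
            · subst h; exact hu (M.edge_vert he)
            · subst h; exact hu (M.edge_vert he.symm)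
            · subst h
              have hbu : b = u := hleaf b (M.adj_sub he)
              subst hbu
              exact hu (M.edge_vert he.symm)
            · subst h
              have hau : a = u := hleaf a (M.adj_sub he.symm)
              subst hau
              exact hu (M.edge_vert he)
        simp [this]
    have h1 := le_matchingNumber G' M₀ hM₀m
    rw [hedge, Set.ncard_diff hTsub (Set.toFinite _)] at h1
    have h2 : T.ncard ≤ M.edgeSet.ncard := Set.ncard_le_ncard hTsub (Set.toFinite _)
    omega
  · -- β(G) ≥ β(G') + 1
    obtain ⟨M', hM', hcard'⟩ := matchingNumber_mem G'
    have hMv : ∀ a ∈ M'.verts, a ≠ u ∧ a ≠ v := by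
      intro a ha
      obtain ⟨b, hb, -⟩ := hM' ha
      have := (hG' a b).mp (M'.adj_sub hb)
      exact ⟨this.2.1, this.2.2.1⟩
    set Mp : G.Subgraph :=
      { verts := M'.verts ∪ {u, v}
        Adj := fun a b => M'.Adj a b ∨ (a = u ∧ b = v) ∨ (a = v ∧ b = u)
        adj_sub := by
          rintro a b (h | ⟨rfl, rfl⟩ | ⟨rfl, rfl⟩)
          · exact ((hG' a b).mp (M'.adj_sub h)).1
          · exact huv
          · exact huv.symm
        edge_vert := by
          rintro a b (h | ⟨rfl, rfl⟩ | ⟨rfl, rfl⟩)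
          · exact Or.inl (M'.edge_vert h)
          · exact Or.inr (Or.inl rfl)
          · exact Or.inr (Or.inr rfl)
        symm := by
          constructor
          rintro a b (h | ⟨rfl, rfl⟩ | ⟨rfl, rfl⟩)
          · exact Or.inl h.symm
          · exact Or.inr (Or.inr ⟨rfl, rfl⟩)
          · exact Or.inr (Or.inl ⟨rfl, rfl⟩) } with hMp
    have hMpm : Mp.IsMatching := by
      rintro a (ha | ha)
      · obtain ⟨b, hb, hbu⟩ := hM' ha
        refine ⟨b, Or.inl hb, ?_⟩
        rintro c (hc | ⟨rfl, rfl⟩ | ⟨rfl, rfl⟩)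
        · exact hbu c hc
        · exact absurd rfl (hMv a ha).1
        · exact absurd rfl (hMv a ha).2
      · rcases ha with rfl | rfl
        · refine ⟨v, Or.inr (Or.inl ⟨rfl, rfl⟩), ?_⟩
          rintro c (hc | ⟨-, rfl⟩ | ⟨h, -⟩)
          · exact absurd rfl (hMv a (M'.edge_vert hc)).1
          · rfl
          · exact absurd h hne
        · refine ⟨u, Or.inr (Or.inr ⟨rfl, rfl⟩), ?_⟩
          rintro c (hc | ⟨h, -⟩ | ⟨-, rfl⟩)
          · exact absurd rfl (hMv a (M'.edge_vert hc)).2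
          · exact absurd h hne.symm
          · rfl
    have hedgep : Mp.edgeSet = insert s(u, v) M'.edgeSet := by
      ext e
      induction e with
      | _ a b =>
        simp only [SimpleGraph.Subgraph.mem_edgeSet, Set.mem_insert_iff, Sym2.eq_iff]
        constructor
        · rintro (h | h | h)
          · exact Or.inr h
          · exact Or.inl (Or.inl h)
          · exact Or.inl (Or.inr h)
        · rintro ((h | h) | h)
          · exact Or.inr (Or.inl h)
          · exact Or.inr (Or.inr h)
          · exact Or.inl h
    have hnotin : s(u, v) ∉ M'.edgeSet := by
      intro h
      rw [SimpleGraph.Subgraph.mem_edgeSet] at h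
      exact ((hG' u v).mp (M'.adj_sub h)).2.1 rfl
    have h3 := le_matchingNumber G Mp hMpm
    rw [hedgep, Set.ncard_insert_of_notMem hnotin (Set.toFinite _), hcard'] at h3
    exact h3

end MatchingLemmas

/-- Main induction: for acyclic graphs, skew-rank = 2 * matching number. -/
lemma skewRank_forest {V : Type} [Fintype V] [DecidableEq V] :
    ∀ (n : ℕ) (G : SimpleGraph V), G.edgeSet.ncard = n → G.IsAcyclic →
      ∀ S : Matrix V V ℝ, IsSkewAdjacencyOf S G → S.rank = 2 * matchingNumber G := by
  intro n
  induction n using Nat.strong_induction_on with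
  | _ n ih =>
    intro G hn hG S hS
    by_cases hempty : G.edgeSet = ∅
    · -- base case : no edges
      have hS0 : S = 0 := by
        ext i j
        by_contra h
        have hadj : G.Adj i j := (hS.2 i j).mp h
        have : s(i, j) ∈ G.edgeSet := hadj
        rw [hempty] at this
        exact this
      have hm : matchingNumber G = 0 := by
        have h1 : {k | ∃ M : G.Subgraph, M.IsMatching ∧ M.edgeSet.ncard = k} = {0} := by
          apply le_antisymm
          · rintro k ⟨M, _, rfl⟩
            have : M.edgeSet = ∅ := by
              apply Set.eq_empty_of_subset_empty
              rw [← hempty]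
              exact M.edgeSet_subset
            simp [this]
          · rintro k rfl
            exact matching_set_nonempty G
        unfold matchingNumber
        rw [h1, csSup_singleton]
      rw [hS0, Matrix.rank_zero, hm, mul_zero]
    · -- inductive step
      obtain ⟨a, b, hab⟩ : ∃ a b : V, G.Adj a b := by
        obtain ⟨e, he⟩ := Set.nonempty_iff_ne_empty.mpr hempty
        induction e with
        | _ a b => exact ⟨a, b, he⟩
      obtain ⟨u, v, huv, hleaf⟩ := exists_leaf hG hab
      have hne : u ≠ v := huv.ne
      -- the reduced graph
      set G' : SimpleGraph V :=
        { Adj := fun i j => G.Adj i j ∧ i ≠ u ∧ i ≠ v ∧ j ≠ u ∧ j ≠ v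
          symm := by
            constructor
            rintro i j ⟨h1, h2, h3, h4, h5⟩
            exact ⟨h1.symm, h4, h5, h2, h3⟩
          loopless := ⟨fun i h => G.loopless.irrefl i h.1⟩ } with hG'def
      have hG'adj : ∀ i j, G'.Adj i j ↔ G.Adj i j ∧ i ≠ u ∧ i ≠ v ∧ j ≠ u ∧ j ≠ v :=
        fun i j => Iff.rfl
      have hle : G' ≤ G := fun i j h => h.1
      have hG'ac : G'.IsAcyclic := by
        intro w c hc
        exact hG (c.mapLe hle) (hc.mapLe hle)
      -- edge count decreases
      have hlt : G'.edgeSet.ncard < n := by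
        rw [← hn]
        apply Set.ncard_lt_ncard _ (Set.toFinite _)
        constructor
        · exact SimpleGraph.edgeSet_mono hle
        · intro hsub
          have : s(u, v) ∈ G'.edgeSet := hsub huv
          rw [SimpleGraph.mem_edgeSet] at this
          exact this.2.1 rfl
      -- the reduced matrix
      set S' : Matrix V V ℝ :=
        Matrix.of (fun i j => if i = u ∨ i = v ∨ j = u ∨ j = v then (0:ℝ) else S i j)
        with hS'def
      have hS'app : ∀ i j, S' i j = if i = u ∨ i = v ∨ j = u ∨ j = v then (0:ℝ) else S i j :=
        fun i j => rfl
      have hskew : ∀ i j, S j i = -S i j := by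
        intro i j
        have := congrFun (congrFun hS.1.1 i) j
        simpa [Matrix.transpose_apply] using this
      have hS'skew : IsSkewAdjacencyOf S' G' := by
        refine ⟨⟨?_, ?_⟩, ?_⟩
        · ext i j
          simp only [Matrix.transpose_apply, hS'app, Matrix.neg_apply]
          by_cases h : i = u ∨ i = v ∨ j = u ∨ j = v
          · rw [if_pos (by tauto), if_pos (by tauto)]
            ring
          · rw [if_neg (by tauto), if_neg (by tauto)]
            exact hskew i j
        · intro i j
          rw [hS'app]
          split
          · exact Or.inl rfl
          · exact hS.1.2 i j
        · intro i j
          rw [hS'app, hG'adj]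
          split
          · rename_i h
            constructor
            · intro h0; exact absurd rfl h0
            · rintro ⟨-, h2, h3, h4, h5⟩
              rcases h with h | h | h | h
              · exact absurd h h2
              · exact absurd h h3
              · exact absurd h h4
              · exact absurd h h5
          · rename_i h
            push_neg at h
            rw [hS.2 i j]
            exact ⟨fun hh => ⟨hh, h.1, h.2.1, h.2.2.1, h.2.2.2⟩, fun hh => hh.1⟩
      -- apply induction hypothesis
      have hIH := ih _ hlt G' rfl hG'ac S' hS'skew
      -- rank relation
      have hSvu : S v u ≠ 0 := (hS.2 v u).mpr huv.symm
      have hSuv : S u v ≠ 0 := (hS.2 u v).mpr huv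
      have hrowv : ∀ j, j ≠ u → S v j = 0 := by
        intro j hj
        by_contra h
        exact hj (hleaf j ((hS.2 v j).mp h))
      have hcolv : ∀ i, i ≠ u → S i v = 0 := by
        intro i hi
        by_contra h
        exact hi (hleaf i ((hS.2 i v).mp h).symm)
      have hrank := rank_pendant S S' u v hne hSvu hSuv hrowv hcolv hS'app
      have hmatch := matchingNumber_pendant G G' u v huv hleaf hG'adj
      rw [hrank, hIH, hmatch]
      ring

/-- The skew-rank of any oriented tree equals twice its matching number. -/
theorem skewRank_tree
    {V : Type} [Fintype V] [DecidableEq V] (G : SimpleGraph V)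
    (hG : G.IsTree) (S : Matrix V V ℝ) (hS : IsSkewAdjacencyOf S G) :
    S.rank = 2 * matchingNumber G := by
  exact skewRank_forest _ G rfl hG.IsAcyclic S hS
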